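/- A pair (Qa, Qb) ∈ [0,1]² is reduced form implementable by a unanimous voting rule if and only if for every j ∈ {0,1,...,n} both of the following inequalities hold: j·(1−π)·Qb − (n−j)·π·Qa + ∑_{k=j}^n (k−j)·B(k) ≥ 0, and (n−j)·π·Qa − j·(1−π)·Qb + ∑_{k=0}^j (j−k)·B(k) ≥ j·B(0) + (n−j)·B(n). -/

import Mathlib

open Finset

lemma sum_Icc_one (f : ℕ → ℝ) (n : ℕ) :
    ∑ k ∈ Icc 1 n, f k = ∑ i ∈ range n, f (i + 1) := by
  induction n with
  | zero => simp
  | succ n ih => rw [Finset.sum_Icc_succ_top (by omega), ih, Finset.sum_range_succ]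

lemma lem_init (g : ℕ → ℝ) (G : ℝ) (M : ℕ)
    (hmono : ∀ k l, 1 ≤ k → k ≤ l → l ≤ M → g l ≤ g k)
    (hsum : ∀ i ≤ M, ∑ k ∈ Icc 1 i, g k ≤ G) :
    ∑ k ∈ Icc 1 M, max 0 (g k) ≤ G := by
  induction M with
  | zero => simpa using hsum 0 le_rfl
  | succ M ih =>
    rcases le_or_gt (g (M + 1)) 0 with h | h
    · rw [Finset.sum_Icc_succ_top (by omega : 1 ≤ M + 1), max_eq_left h, add_zero]
      exact ih (fun k l hk hkl hl => hmono k l hk hkl (by omega))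
        (fun i hi => hsum i (by omega))
    · have hc : ∀ k ∈ Icc 1 (M + 1), max 0 (g k) = g k := by
        intro k hk
        simp only [mem_Icc] at hk
        exact max_eq_right (le_trans h.le (hmono k (M + 1) hk.1 hk.2 le_rfl))
      rw [Finset.sum_congr rfl hc]
      exact hsum (M + 1) le_rfl

lemma lem_tail (g : ℕ → ℝ) (N : ℕ) : ∀ G : ℝ, 0 ≤ G →
    (∀ k l, 1 ≤ k → k ≤ l → l ≤ N → g k ≤ g l) →
    (∀ j, 1 ≤ j → ∑ k ∈ Icc j N, g k ≤ G) →
    ∑ k ∈ Icc 1 N, max 0 (g k) ≤ G := by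
  induction N with
  | zero => intro G hG _ _; simpa using hG
  | succ N ih =>
    intro G hG hmono hsum
    rcases le_or_gt (g (N + 1)) 0 with h | h
    · have hc : ∀ k ∈ Icc 1 (N + 1), max 0 (g k) = 0 := by
        intro k hk
        simp only [mem_Icc] at hk
        exact max_eq_left (le_trans (hmono k (N + 1) hk.1 hk.2 le_rfl) h)
      rw [Finset.sum_congr rfl hc, Finset.sum_const_zero]
      exact hG
    · have hlast : g (N + 1) ≤ G := by
        have := hsum (N + 1) (by omega)
        simpa using this
      rw [Finset.sum_Icc_succ_top (by omega : 1 ≤ N + 1), max_eq_right h.le]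
      have step : ∑ k ∈ Icc 1 N, max 0 (g k) ≤ G - g (N + 1) := by
        apply ih (G - g (N + 1)) (by linarith)
          (fun k l hk hkl hl => hmono k l hk hkl (by omega))
        intro j hj
        rcases le_or_gt j (N + 1) with hj2 | hj2
        · have := hsum j hj
          rw [Finset.sum_Icc_succ_top hj2] at this
          linarith
        · rw [Finset.Icc_eq_empty (by omega), Finset.sum_empty]
          linarith
      linarith

lemma abel1 (m : ℕ → ℝ) (N : ℕ) :
    ∑ i ∈ range N, ((i : ℝ) + 1) * (m (i + 1) - m (i + 2)) =
      (∑ i ∈ range N, m (i + 1)) - N * m (N + 1) := by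
  induction N with
  | zero => simp
  | succ N ih =>
    rw [Finset.sum_range_succ, ih, Finset.sum_range_succ]
    push_cast
    ring

lemma abel2 (p : ℕ → ℝ) (N : ℕ) :
    ∑ i ∈ range N, ((i : ℝ) + 1) * (p (i + 1) - p i) =
      N * p N - ∑ i ∈ range N, p i := by
  induction N with
  | zero => simp
  | succ N ih =>
    rw [Finset.sum_range_succ, ih, Finset.sum_range_succ]
    push_cast
    ring

lemma sum_tail_eq (B : ℕ → ℝ) (n j : ℕ) :
    ∑ l ∈ Icc (j + 1) n, (∑ k ∈ Icc l n, B k) =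
      ∑ k ∈ Icc j n, ((k : ℝ) - j) * B k := by
  have h1 : ∀ l ∈ Icc (j + 1) n, (∑ k ∈ Icc l n, B k)
      = ∑ k ∈ Icc (j + 1) n, if l ≤ k then B k else 0 := by
    intro l hl
    simp only [mem_Icc] at hl
    rw [← Finset.sum_filter]
    apply Finset.sum_congr _ (fun x _ => rfl)
    ext x
    simp only [mem_Icc, mem_filter]
    omega
  rw [Finset.sum_congr rfl h1, Finset.sum_comm]
  have h2 : ∑ k ∈ Icc j n, ((k : ℝ) - j) * B k
      = ∑ k ∈ Icc (j + 1) n, ((k : ℝ) - j) * B k := by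
    rcases le_or_gt j n with hjn | hjn
    · have hins : Icc j n = insert j (Icc (j + 1) n) := by
        ext x; simp only [mem_Icc, mem_insert]; omega
      rw [hins, Finset.sum_insert (by simp [mem_Icc])]
      simp
    · rw [Finset.Icc_eq_empty (by omega), Finset.Icc_eq_empty (by omega)]
  rw [h2]
  apply Finset.sum_congr rfl
  intro k hk
  simp only [mem_Icc] at hk
  rw [← Finset.sum_filter]
  have hf : (Icc (j + 1) n).filter (fun l => l ≤ k) = Icc (j + 1) k := by
    ext x; simp only [mem_Icc, mem_filter]; omega
  rw [hf, Finset.sum_const, Nat.card_Icc]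
  have hcard : k + 1 - (j + 1) = k - j := by omega
  rw [hcard, nsmul_eq_mul, Nat.cast_sub (by omega)]

lemma sum_init_eq (B : ℕ → ℝ) (j : ℕ) :
    ∑ l ∈ Icc 1 (j - 1), (∑ k ∈ Icc 1 l, B k) =
      ∑ k ∈ Icc 1 j, ((j : ℝ) - k) * B k := by
  have h1 : ∀ l ∈ Icc 1 (j - 1), (∑ k ∈ Icc 1 l, B k)
      = ∑ k ∈ Icc 1 j, if k ≤ l then B k else 0 := by
    intro l hl
    simp only [mem_Icc] at hl
    rw [← Finset.sum_filter]
    apply Finset.sum_congr _ (fun x _ => rfl)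
    ext x
    simp only [mem_Icc, mem_filter]
    omega
  rw [Finset.sum_congr rfl h1, Finset.sum_comm]
  apply Finset.sum_congr rfl
  intro k hk
  simp only [mem_Icc] at hk
  rw [← Finset.sum_filter]
  have hf : (Icc 1 (j - 1)).filter (fun l => k ≤ l) = Icc k (j - 1) := by
    ext x; simp only [mem_Icc, mem_filter]; omega
  rw [hf, Finset.sum_const, Nat.card_Icc]
  have hcard : j - 1 + 1 - k = j - k := by omega
  rw [hcard, nsmul_eq_mul, Nat.cast_sub hk.2]

lemma telescope_Icc (m : ℕ → ℝ) (n : ℕ) :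
    ∑ k ∈ Icc 1 n, (m k - m (k+1)) = m 1 - m (n+1) := by
  induction n with
  | zero => simp
  | succ n ih => rw [Finset.sum_Icc_succ_top (by omega), ih]; ring

lemma telescope2_Icc (p : ℕ → ℝ) (n : ℕ) :
    ∑ k ∈ Icc 1 n, (p k - p (k-1)) = p n - p 0 := by
  induction n with
  | zero => simp
  | succ n ih =>
    rw [Finset.sum_Icc_succ_top (by omega), ih]
    simp only [Nat.add_sub_cancel]
    ring

lemma abel1_Icc (m : ℕ → ℝ) (n : ℕ) :
    ∑ k ∈ Icc 1 n, (k:ℝ) * (m k - m (k+1)) = (∑ k ∈ Icc 1 n, m k) - n * m (n+1) := by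
  induction n with
  | zero => simp
  | succ n ih =>
    rw [Finset.sum_Icc_succ_top (by omega), ih, Finset.sum_Icc_succ_top (by omega)]
    push_cast
    ring

lemma abel2_Icc (p : ℕ → ℝ) (n : ℕ) :
    ∑ k ∈ Icc 1 n, (k:ℝ) * (p k - p (k-1)) = n * p n - ∑ i ∈ range n, p i := by
  induction n with
  | zero => simp
  | succ n ih =>
    rw [Finset.sum_Icc_succ_top (by omega), ih, Finset.sum_range_succ]
    simp only [Nat.add_sub_cancel]
    push_cast
    ring

set_option maxHeartbeats 4000000 in
/-- Theorem (unanimous reduced form): `(Qa, Qb) ∈ [0,1]²` is reduced form implementable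
by a unanimous voting rule iff the `2(n+1)` linear inequalities hold, with the second
family tightened by `j·B(0) + (n−j)·B(n)`. -/
theorem unanimous_reduced_form_implementable_iff
    (n : ℕ) (hn : 2 ≤ n) (π : ℝ) (hπ0 : 0 < π) (hπ1 : π < 1)
    (B : ℕ → ℝ) (hBnonneg : ∀ k ≤ n, 0 ≤ B k)
    (hBsum : ∑ k ∈ range (n + 1), B k = 1)
    (hBmean : ∑ k ∈ range (n + 1), (k : ℝ) * B k = n * π)
    (Qa Qb : ℝ) (hQa : Qa ∈ Set.Icc (0 : ℝ) 1) (hQb : Qb ∈ Set.Icc (0 : ℝ) 1) :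
    (∃ q : ℕ → ℝ, (∀ k ≤ n, 0 ≤ q k ∧ q k ≤ 1) ∧
      q 0 = 0 ∧ q n = 1 ∧
      (1 / (n * π)) * ∑ k ∈ range (n + 1), (k : ℝ) * q k * B k = Qa ∧
      (1 / (n * (1 - π))) * ∑ k ∈ range (n + 1), ((n : ℝ) - k) * q k * B k = Qb)
    ↔
    (∀ j ≤ n,
      (j : ℝ) * (1 - π) * Qb - ((n : ℝ) - j) * π * Qa
        + ∑ k ∈ Icc j n, ((k : ℝ) - j) * B k ≥ 0 ∧
      ((n : ℝ) - j) * π * Qa - (j : ℝ) * (1 - π) * Qb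
        + ∑ k ∈ range (j + 1), ((j : ℝ) - k) * B k
        ≥ (j : ℝ) * B 0 + ((n : ℝ) - j) * B n) := by
  obtain ⟨hQa0, hQa1⟩ := hQa
  obtain ⟨hQb0, hQb1⟩ := hQb
  have hπ1' : (0:ℝ) < 1 - π := by linarith
  have hn0 : (0:ℝ) < (n:ℝ) := by
    have : 0 < n := by omega
    exact_mod_cast this
  constructor
  · rintro ⟨q, hq01, hq0, hqn, hqa, hqb⟩
    have hnπ : (n:ℝ) * π ≠ 0 := by positivity
    have hnπ' : (n:ℝ) * (1 - π) ≠ 0 := by positivity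
    have hA : ∑ k ∈ range (n+1), (k:ℝ) * q k * B k = (n:ℝ) * π * Qa := by
      field_simp at hqa
      linarith
    have hC : ∑ k ∈ range (n+1), ((n:ℝ) - k) * q k * B k = (n:ℝ) * (1-π) * Qb := by
      field_simp at hqb
      linarith
    intro j hj
    have hw0 : ∀ k, k ≤ n → 0 ≤ q k * B k :=
      fun k hk => mul_nonneg (hq01 k hk).1 (hBnonneg k hk)
    have hw1 : ∀ k, k ≤ n → q k * B k ≤ B k := by
      intro k hk
      nlinarith [(hq01 k hk).2, hBnonneg k hk, (hq01 k hk).1]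
    have key : (j:ℝ) * (1 - π) * Qb - ((n:ℝ) - j) * π * Qa
        = ∑ k ∈ range (n+1), ((j:ℝ) - k) * (q k * B k) := by
      have expand : (n:ℝ) * ∑ k ∈ range (n+1), ((j:ℝ) - k) * (q k * B k)
          = (j:ℝ) * ∑ k ∈ range (n+1), ((n:ℝ) - k) * q k * B k
            - ((n:ℝ) - j) * ∑ k ∈ range (n+1), (k:ℝ) * q k * B k := by
        rw [Finset.mul_sum, Finset.mul_sum, Finset.mul_sum, ← Finset.sum_sub_distrib]
        exact Finset.sum_congr rfl (fun k _ => by ring)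
      rw [hA, hC] at expand
      apply mul_left_cancel₀ (ne_of_gt hn0)
      rw [expand]
      ring
    have hsplit : ∑ k ∈ range (n+1), ((j:ℝ) - k) * (q k * B k)
        = (∑ k ∈ range j, ((j:ℝ) - k) * (q k * B k))
          + ∑ k ∈ Icc j n, ((j:ℝ) - k) * (q k * B k) := by
      rw [range_eq_Ico, range_eq_Ico, ← Finset.Ico_add_one_right_eq_Icc]
      exact (Finset.sum_Ico_consecutive _ (Nat.zero_le j) (by omega : j ≤ n + 1)).symm
    constructor
    · have h1 : 0 ≤ ∑ k ∈ range j, ((j:ℝ) - k) * (q k * B k) := by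
        apply Finset.sum_nonneg
        intro k hk
        rw [mem_range] at hk
        have : (k:ℝ) ≤ j := by exact_mod_cast hk.le
        exact mul_nonneg (by linarith) (hw0 k (by omega))
      have h2 : 0 ≤ ∑ k ∈ Icc j n,
          (((j:ℝ) - k) * (q k * B k) + ((k:ℝ) - j) * B k) := by
        apply Finset.sum_nonneg
        intro k hk
        simp only [mem_Icc] at hk
        have hjk : (j:ℝ) ≤ k := by exact_mod_cast hk.1
        have := hw1 k hk.2
        have := hw0 k hk.2
        nlinarith
      rw [Finset.sum_add_distrib] at h2
      rw [ge_iff_le, key, hsplit]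
      linarith
    · have key2 : ((n:ℝ) - j) * π * Qa - (j:ℝ) * (1 - π) * Qb
          = ∑ k ∈ range (n+1), ((k:ℝ) - j) * (q k * B k) := by
        have hneg : ∑ k ∈ range (n+1), ((k:ℝ) - j) * (q k * B k)
            = - ∑ k ∈ range (n+1), ((j:ℝ) - k) * (q k * B k) := by
          rw [← Finset.sum_neg_distrib]
          exact Finset.sum_congr rfl (fun k _ => by ring)
        rw [hneg, ← key]
        ring
      have hsplit2 : ∑ k ∈ range (n+1), ((k:ℝ) - j) * (q k * B k)
          = (∑ k ∈ range (j+1), ((k:ℝ) - j) * (q k * B k))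
            + ∑ k ∈ Ico (j+1) (n+1), ((k:ℝ) - j) * (q k * B k) := by
        rw [range_eq_Ico, range_eq_Ico]
        exact (Finset.sum_Ico_consecutive _ (Nat.zero_le (j+1)) (by omega : j + 1 ≤ n + 1)).symm
      have part1 : (j:ℝ) * B 0 ≤ ∑ k ∈ range (j+1),
          (((k:ℝ) - j) * (q k * B k) + ((j:ℝ) - k) * B k) := by
        have h0mem : 0 ∈ range (j+1) := by simp
        have hterm : ((0:ℕ):ℝ) * B 0 + ((j:ℝ) - (0:ℕ)) * B 0
            = (j:ℝ) * B 0 := by push_cast; ring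
        calc (j:ℝ) * B 0
            = (((0:ℕ):ℝ) - j) * (q 0 * B 0) + ((j:ℝ) - (0:ℕ)) * B 0 := by
              rw [hq0]; push_cast; ring
          _ ≤ _ := by
              apply Finset.single_le_sum (f := fun (k : ℕ) =>
                ((k:ℝ) - j) * (q k * B k) + ((j:ℝ) - k) * B k) _ h0mem
              intro k hk
              rw [mem_range] at hk
              have hkj : (k:ℝ) ≤ j := by exact_mod_cast Nat.lt_succ_iff.mp hk
              have hkn : k ≤ n := by omega
              have := hw1 k hkn
              have := hw0 k hkn
              show 0 ≤ ((k:ℝ) - j) * (q k * B k) + ((j:ℝ) - k) * B k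
              nlinarith
      have part2 : ((n:ℝ) - j) * B n
          ≤ ∑ k ∈ Ico (j+1) (n+1), ((k:ℝ) - j) * (q k * B k) := by
        rcases eq_or_lt_of_le hj with rfl | hjn
        · simp
        · have hnmem : n ∈ Ico (j+1) (n+1) := by simp [mem_Ico]; omega
          calc ((n:ℝ) - j) * B n = ((n:ℝ) - j) * (q n * B n) := by rw [hqn, one_mul]
            _ ≤ _ := by
                apply Finset.single_le_sum (f := fun (k : ℕ) => ((k:ℝ) - j) * (q k * B k)) _ hnmem
                intro k hk
                rw [mem_Ico] at hk
                have : (j:ℝ) ≤ k := by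
                  have : j ≤ k := by omega
                  exact_mod_cast this
                show 0 ≤ ((k:ℝ) - j) * (q k * B k)
                exact mul_nonneg (by linarith) (hw0 k (by omega))
      rw [Finset.sum_add_distrib] at part1
      rw [ge_iff_le, key2, hsplit2]
      linarith
  · intro hineq
    have hB0 : 0 ≤ B 0 := hBnonneg 0 (by omega)
    have hBn : 0 ≤ B n := hBnonneg n le_rfl
    set T : ℕ → ℝ := fun l => ∑ k ∈ Icc l n, B k with hT
    set P : ℕ → ℝ := fun l => ∑ k ∈ Icc 1 l, B k with hP
    set S : ℝ := π * Qa + (1 - π) * Qb with hSdef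
    set A : ℝ := (n:ℝ) * π * Qa with hAdef
    have hTanti : ∀ k l, k ≤ l → T l ≤ T k := by
      intro k l hkl
      apply Finset.sum_le_sum_of_subset_of_nonneg (Finset.Icc_subset_Icc_left hkl)
      intro x hx _
      exact hBnonneg x (mem_Icc.mp hx).2
    have hPmono : ∀ k l, k ≤ l → l ≤ n → P k ≤ P l := by
      intro k l hkl hln
      apply Finset.sum_le_sum_of_subset_of_nonneg (Finset.Icc_subset_Icc_right hkl)
      intro x hx _
      exact hBnonneg x (le_trans (mem_Icc.mp hx).2 hln)
    have hsplit0 : ∀ (f : ℕ → ℝ) (N : ℕ),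
        ∑ k ∈ range (N+1), f k = f 0 + ∑ k ∈ Icc 1 N, f k := by
      intro f N
      rw [sum_Icc_one f N, Finset.sum_range_succ' f N]
      ring
    have hT1 : T 1 = 1 - B 0 := by
      have h := hsplit0 B n
      rw [hBsum] at h
      simp only [hT]
      linarith
    have hT0 : T 0 = 1 := by
      simp only [hT]
      rw [show Icc 0 n = range (n+1) by rw [← Finset.Ico_add_one_right_eq_Icc, Nat.Ico_zero_eq_range]]
      exact hBsum
    have hTn : T n = B n := by simp [hT]
    have hTtop : ∀ l, n < l → T l = 0 := by
      intro l hl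
      simp only [hT]
      rw [Finset.Icc_eq_empty (by omega)]
      exact Finset.sum_empty
    have hTsucc : ∀ k, k ≤ n → T k = B k + T (k+1) := by
      intro k hk
      simp only [hT]
      rw [show Icc k n = insert k (Icc (k+1) n) by
            ext x; simp only [mem_Icc, mem_insert]; omega,
          Finset.sum_insert (by simp only [mem_Icc]; omega)]
    have hPsucc : ∀ k, 1 ≤ k → P k = P (k-1) + B k := by
      intro k hk
      simp only [hP]
      rw [show Icc 1 k = insert k (Icc 1 (k-1)) by
            ext x; simp only [mem_Icc, mem_insert]; omega,
          Finset.sum_insert (by simp only [mem_Icc]; omega)]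
      ring
    have hP0 : P 0 = 0 := by simp [hP]
    have hPn : P n = 1 - B 0 := by
      rw [show P n = T 1 from rfl, hT1]
    have h0sec : (n:ℝ) * B n ≤ (n:ℝ) * (π * Qa) := by
      have h := (hineq 0 (by omega)).2
      norm_num at h
      ring_nf at h ⊢
      linarith
    have hπQaBn : B n ≤ π * Qa := le_of_mul_le_mul_left h0sec hn0
    have hS_Bn : B n ≤ S := by
      have : 0 ≤ (1-π)*Qb := mul_nonneg (le_of_lt hπ1') hQb0
      rw [hSdef]
      linarith
    have hS0 : 0 ≤ S := by
      have h1 := mul_nonneg hπ0.le hQa0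
      have h2 := mul_nonneg hπ1'.le hQb0
      rw [hSdef]
      linarith
    have hsum2 : ∑ k ∈ range (n+1), ((n:ℝ)-k)*B k = n - n*π := by
      have hh : ∑ k ∈ range (n+1), ((n:ℝ)-k)*B k
          = (n:ℝ) * (∑ k ∈ range (n+1), B k) - ∑ k ∈ range (n+1), (k:ℝ)*B k := by
        rw [Finset.mul_sum, ← Finset.sum_sub_distrib]
        exact Finset.sum_congr rfl fun k _ => by ring
      rw [hBsum, hBmean] at hh
      rw [hh]
      ring
    have hnsec : (n:ℝ) * ((1-π)*Qb) ≤ (n:ℝ) * (1 - π - B 0) := by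
      have h := (hineq n le_rfl).2
      rw [hsum2] at h
      ring_nf at h ⊢
      linarith
    have hQb_ub : (1-π)*Qb ≤ 1 - π - B 0 := le_of_mul_le_mul_left hnsec hn0
    have hS_ub : S ≤ 1 - B 0 := by
      have : π * Qa ≤ π := mul_le_of_le_one_right hπ0.le hQa1
      rw [hSdef]
      linarith
    have fam1 : ∀ j, j ≤ n → A ≤ (j:ℝ)*S + ∑ k ∈ Icc j n, ((k:ℝ)-j)*B k := by
      intro j hj
      have h := (hineq j hj).1
      have hr : (j:ℝ)*(1-π)*Qb - ((n:ℝ)-j)*π*Qa = (j:ℝ)*S - A := by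
        rw [hSdef, hAdef]; ring
      rw [hr] at h
      linarith
    have fam2 : ∀ j, 1 ≤ j → j ≤ n →
        (j:ℝ)*(S - B n) + (n:ℝ)*B n - A ≤ ∑ l ∈ Icc 1 (j-1), P l := by
      intro j hj1 hj
      have h := (hineq j hj).2
      have hr : ((n:ℝ)-j)*π*Qa - (j:ℝ)*(1-π)*Qb = A - (j:ℝ)*S := by
        rw [hSdef, hAdef]; ring
      rw [hr] at h
      rw [hsplit0 (fun k => ((j:ℝ)-k)*B k) j] at h
      have hid : ∑ l ∈ Icc 1 (j-1), P l = ∑ k ∈ Icc 1 j, ((j:ℝ)-k)*B k := by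
        simp only [hP]
        exact sum_init_eq B j
      rw [hid]
      simp only [Nat.cast_zero] at h
      linarith
    -- the top-fill
    set m : ℕ → ℝ := fun k => min S (T k) with hm
    have hmanti : ∀ k l, k ≤ l → m l ≤ m k := by
      intro k l hkl
      exact min_le_min le_rfl (hTanti k l hkl)
    have hwp0 : ∀ k, 0 ≤ m k - m (k+1) :=
      fun k => sub_nonneg.mpr (hmanti k (k+1) (by omega))
    have hwp1 : ∀ k, k ≤ n → m k - m (k+1) ≤ B k := by
      intro k hk
      have h1 : T k = B k + T (k+1) := hTsucc k hk
      have h2 : m k ≤ m (k+1) + B k := by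
        show min S (T k) ≤ min S (T (k+1)) + B k
        calc min S (T k) = min S (T (k+1) + B k) := by rw [h1, add_comm]
          _ ≤ min (S + B k) (T (k+1) + B k) :=
              min_le_min (by linarith [hBnonneg k hk]) le_rfl
          _ = min S (T (k+1)) + B k := by rw [min_add_add_right]
      linarith
    have hm1 : m 1 = S := by
      simp only [hm]
      rw [hT1]
      exact min_eq_left (by linarith)
    have hmn1 : m (n+1) = 0 := by
      simp only [hm]
      rw [hTtop (n+1) (by omega)]
      exact min_eq_right hS0
    have hmn : m n = B n := by
      simp only [hm]
      rw [hTn]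
      exact min_eq_right hS_Bn
    have hwpsum : ∑ k ∈ Icc 1 n, (m k - m (k+1)) = S := by
      rw [telescope_Icc m n, hm1, hmn1]
      ring
    have hwpn : m n - m (n+1) = B n := by rw [hmn, hmn1]; ring
    have hwpA : A ≤ ∑ k ∈ Icc 1 n, (k:ℝ) * (m k - m (k+1)) := by
      have habel : ∑ k ∈ Icc 1 n, (k:ℝ) * (m k - m (k+1))
          = (∑ k ∈ Icc 1 n, m k) - (n:ℝ) * m (n+1) := by
        exact abel1_Icc m n
      rw [habel, hmn1, mul_zero, sub_zero]
      have hmink : ∀ k, m k = S - max 0 (S - T k) := by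
        intro k
        simp only [hm]
        rcases le_total S (T k) with h | h
        · rw [min_eq_left h, max_eq_left (by linarith)]; ring
        · rw [min_eq_right h, max_eq_right (by linarith)]; ring
      have hsum_m : ∑ k ∈ Icc 1 n, m k
          = (n:ℝ) * S - ∑ k ∈ Icc 1 n, max 0 (S - T k) := by
        rw [Finset.sum_congr rfl (fun k _ => hmink k), Finset.sum_sub_distrib,
          Finset.sum_const, Nat.card_Icc, nsmul_eq_mul]
        norm_num
      have hG : 0 ≤ (n:ℝ)*S - A := by
        have := fam1 n le_rfl
        simp only [Finset.Icc_self, Finset.sum_singleton, sub_self, zero_mul] at this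
        linarith
      have htail : ∑ k ∈ Icc 1 n, max 0 (S - T k) ≤ (n:ℝ)*S - A := by
        have hmono' : ∀ k l, 1 ≤ k → k ≤ l → l ≤ n → S - T k ≤ S - T l := by
          intro k l _ hkl _
          have := hTanti k l hkl
          linarith
        have hsum' : ∀ j, 1 ≤ j → ∑ k ∈ Icc j n, (S - T k) ≤ (n:ℝ)*S - A := by
          intro j hj
          rcases le_or_gt j (n+1) with hj2 | hj2
          · obtain ⟨i, rfl⟩ : ∃ i, j = i + 1 := ⟨j-1, by omega⟩
            have hin : i ≤ n := by omega
            have hf := fam1 i hin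
            have hid : ∑ l ∈ Icc (i+1) n, T l = ∑ k ∈ Icc i n, ((k:ℝ) - i) * B k := by
              simp only [hT]
              exact sum_tail_eq B n i
            have hcount : ∑ k ∈ Icc (i+1) n, (S - T k)
                = ((n+1-(i+1) : ℕ) : ℝ) * S - ∑ k ∈ Icc (i+1) n, T k := by
              rw [Finset.sum_sub_distrib, Finset.sum_const, Nat.card_Icc, nsmul_eq_mul]
            have hc1 : ((n+1-(i+1) : ℕ) : ℝ) = (n:ℝ) - i := by
              have he : n+1-(i+1) = n - i := by omega
              rw [he, Nat.cast_sub hin]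
            rw [hcount, hid, hc1]
            linarith
          · rw [Finset.Icc_eq_empty (by omega), Finset.sum_empty]
            exact hG
        exact lem_tail (fun k => S - T k) n ((n:ℝ)*S - A) hG hmono' hsum'
      linarith
    -- the bottom-fill
    set p : ℕ → ℝ := fun k => min (S - B n) (P k) with hp
    have hp0 : p 0 = 0 := by
      simp only [hp]
      rw [hP0]
      exact min_eq_right (by linarith)
    have hPn1 : P (n-1) = 1 - B 0 - B n := by
      have h := hPsucc n (by omega)
      rw [hPn] at h
      linarith
    have hpn1 : p (n-1) = S - B n := by
      simp only [hp]
      rw [hPn1]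
      exact min_eq_left (by linarith)
    set wm : ℕ → ℝ := fun k => if k = n then B n else p k - p (k-1) with hwm
    have hwm0 : ∀ k, 1 ≤ k → k ≤ n → 0 ≤ wm k := by
      intro k h1 h2
      simp only [hwm]
      split_ifs with h
      · exact hBn
      · have : k ≤ n - 1 := by omega
        have := hPmono (k-1) k (by omega) h2
        have : p (k-1) ≤ p k := min_le_min le_rfl (by assumption)
        linarith
    have hwm1 : ∀ k, 1 ≤ k → k ≤ n → wm k ≤ B k := by
      intro k h1 h2
      simp only [hwm]
      split_ifs with h
      · exact h ▸ le_rfl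
      · have hPs := hPsucc k h1
        have hBk := hBnonneg k h2
        have h2' : p k ≤ p (k-1) + B k := by
          simp only [hp]
          calc min (S - B n) (P k) = min (S - B n) (P (k-1) + B k) := by rw [← hPs]
            _ ≤ min (S - B n + B k) (P (k-1) + B k) :=
                min_le_min (by linarith) le_rfl
            _ = min (S - B n) (P (k-1)) + B k := by rw [min_add_add_right]
        linarith
    have hwmn : wm n = B n := by simp [hwm]
    have hicc_split : ∀ f : ℕ → ℝ, ∑ k ∈ Icc 1 n, f k = (∑ k ∈ Icc 1 (n-1), f k) + f n := by
      intro f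
      rw [show Icc 1 n = insert n (Icc 1 (n-1)) by
            ext x; simp only [mem_Icc, mem_insert]; omega,
          Finset.sum_insert (by simp only [mem_Icc]; omega)]
      ring
    have hwm_eq : ∀ k ∈ Icc 1 (n-1), wm k = p k - p (k-1) := by
      intro k hk
      simp only [mem_Icc] at hk
      simp only [hwm]
      rw [if_neg (by omega)]
    have htel : ∑ k ∈ Icc 1 (n-1), (p k - p (k-1)) = S - B n := by
      rw [telescope2_Icc p (n-1), hpn1, hp0]
      ring
    have hwmsum : ∑ k ∈ Icc 1 n, wm k = S := by
      rw [hicc_split wm, Finset.sum_congr rfl hwm_eq, htel, hwmn]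
      ring
    have hwmA : ∑ k ∈ Icc 1 n, (k:ℝ) * wm k ≤ A := by
      have hstep1 : ∑ k ∈ Icc 1 n, (k:ℝ) * wm k
          = (∑ k ∈ Icc 1 (n-1), (k:ℝ) * (p k - p (k-1))) + (n:ℝ) * B n := by
        rw [hicc_split (fun k => (k:ℝ) * wm k), hwmn]
        congr 1
        apply Finset.sum_congr rfl
        intro k hk
        rw [hwm_eq k hk]
      have habel : ∑ k ∈ Icc 1 (n-1), (k:ℝ) * (p k - p (k-1))
          = ((n-1 : ℕ):ℝ) * p (n-1) - ∑ i ∈ range (n-1), p i := by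
        exact abel2_Icc p (n-1)
      have hrange_p : ∑ i ∈ range (n-1), p i = ∑ k ∈ Icc 1 (n-2), p k := by
        rw [show n-1 = (n-2)+1 by omega, Finset.sum_range_succ' p (n-2), hp0,
          add_zero, ← sum_Icc_one p (n-2)]
      have hpk : ∀ k, p k = (S - B n) - max 0 ((S - B n) - P k) := by
        intro k
        simp only [hp]
        rcases le_total (S - B n) (P k) with h | h
        · rw [min_eq_left h, max_eq_left (by linarith)]; ring
        · rw [min_eq_right h, max_eq_right (by linarith)]; ring
      have hsum_p : ∑ k ∈ Icc 1 (n-2), p k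
          = ((n-2 : ℕ):ℝ) * (S - B n) - ∑ k ∈ Icc 1 (n-2), max 0 ((S - B n) - P k) := by
        rw [Finset.sum_congr rfl (fun k _ => hpk k), Finset.sum_sub_distrib,
          Finset.sum_const, Nat.card_Icc, nsmul_eq_mul]
        simp only [Nat.add_sub_cancel]
      have hinit : ∑ k ∈ Icc 1 (n-2), max 0 ((S - B n) - P k)
          ≤ A - (S - B n) - (n:ℝ) * B n := by
        have hmono' : ∀ k l, 1 ≤ k → k ≤ l → l ≤ n-2 →
            (S - B n) - P l ≤ (S - B n) - P k := by
          intro k l hk hkl hl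
          have := hPmono k l hkl (by omega)
          linarith
        have hsum' : ∀ i ≤ n-2, ∑ k ∈ Icc 1 i, ((S - B n) - P k)
            ≤ A - (S - B n) - (n:ℝ)*B n := by
          intro i hi
          have hf := fam2 (i+1) (by omega) (by omega)
          rw [show i+1-1 = i by omega] at hf
          have hPsum : ∑ k ∈ Icc 1 i, ((S - B n) - P k)
              = (i:ℝ) * (S - B n) - ∑ k ∈ Icc 1 i, P k := by
            rw [Finset.sum_sub_distrib, Finset.sum_const, Nat.card_Icc, nsmul_eq_mul]
            simp only [Nat.add_sub_cancel]
          rw [hPsum]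
          push_cast at hf
          linarith
        exact lem_init (fun k => (S - B n) - P k) _ (n-2) hmono' hsum'
      have hc1 : ((n-1 : ℕ):ℝ) = (n:ℝ) - 1 := by
        push_cast [Nat.cast_sub (by omega : 1 ≤ n)]
        ring
      have hc2 : ((n-2 : ℕ):ℝ) = (n:ℝ) - 2 := by
        push_cast [Nat.cast_sub (by omega : 2 ≤ n)]
        ring
      rw [hstep1, habel, hrange_p, hpn1, hc1, hsum_p, hc2]
      linarith [hinit]
    -- combine
    set f1 : ℝ := ∑ k ∈ Icc 1 n, (k:ℝ) * (m k - m (k+1)) with hf1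
    set f0 : ℝ := ∑ k ∈ Icc 1 n, (k:ℝ) * wm k with hf0
    have hf0f1 : f0 ≤ f1 := le_trans hwmA hwpA
    set lam : ℝ := if f0 = f1 then 0 else (A - f0)/(f1 - f0) with hlam
    have hlam0 : 0 ≤ lam := by
      rw [hlam]
      split_ifs with h
      · exact le_rfl
      · exact div_nonneg (by linarith) (by cases lt_or_eq_of_le hf0f1 with
          | inl h' => linarith
          | inr h' => exact absurd h' h)
    have hlam1 : lam ≤ 1 := by
      rw [hlam]
      split_ifs with h
      · norm_num
      · have hlt : f0 < f1 := lt_of_le_of_ne hf0f1 h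
        rw [div_le_one (by linarith)]
        linarith
    have hlamA : lam * (f1 - f0) = A - f0 := by
      rw [hlam]
      split_ifs with h
      · have hAf0 : A = f0 := le_antisymm (by rw [h]; exact hwpA) hwmA
        rw [hAf0]
        ring
      · have hlt : f0 < f1 := lt_of_le_of_ne hf0f1 h
        rw [div_mul_cancel₀]
        linarith
    set w : ℕ → ℝ := fun k => lam * (m k - m (k+1)) + (1 - lam) * wm k with hw
    have hw0' : ∀ k, 1 ≤ k → k ≤ n → 0 ≤ w k := by
      intro k h1 h2
      simp only [hw]
      exact add_nonneg (mul_nonneg hlam0 (hwp0 k))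
        (mul_nonneg (by linarith) (hwm0 k h1 h2))
    have hw1' : ∀ k, 1 ≤ k → k ≤ n → w k ≤ B k := by
      intro k h1 h2
      simp only [hw]
      have ha := mul_le_mul_of_nonneg_left (hwp1 k h2) hlam0
      have hb := mul_le_mul_of_nonneg_left (hwm1 k h1 h2)
        (by linarith : (0:ℝ) ≤ 1 - lam)
      calc lam * (m k - m (k+1)) + (1 - lam) * wm k
          ≤ lam * B k + (1 - lam) * B k := add_le_add ha hb
        _ = B k := by ring
    have hwn : w n = B n := by
      simp only [hw]
      rw [hwpn, hwmn]
      ring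
    have hwsum : ∑ k ∈ Icc 1 n, w k = S := by
      simp only [hw]
      rw [Finset.sum_add_distrib, ← Finset.mul_sum, ← Finset.mul_sum, hwpsum, hwmsum]
      ring
    have hwA : ∑ k ∈ Icc 1 n, (k:ℝ) * w k = A := by
      have hexp : ∑ k ∈ Icc 1 n, (k:ℝ) * w k
          = lam * f1 + (1 - lam) * f0 := by
        rw [hf1, hf0, Finset.mul_sum, Finset.mul_sum, ← Finset.sum_add_distrib]
        apply Finset.sum_congr rfl
        intro k _
        simp only [hw]
        ring
      rw [hexp]
      ring_nf
      ring_nf at hlamA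
      linarith
    set q : ℕ → ℝ := fun k =>
      if k = 0 then 0 else if B k = 0 then (if k = n then 1 else 0) else w k / B k with hq
    have hqB : ∀ k ∈ Icc 1 n, q k * B k = w k := by
      intro k hk
      simp only [mem_Icc] at hk
      simp only [hq]
      rw [if_neg (by omega)]
      by_cases hB : B k = 0
      · rw [if_pos hB, hB, mul_zero]
        have h0 : w k ≤ 0 := hB ▸ hw1' k hk.1 hk.2
        linarith [hw0' k hk.1 hk.2]
      · rw [if_neg hB, div_mul_cancel₀ _ hB]
    refine ⟨q, ?_, ?_, ?_, ?_, ?_⟩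
    · intro k hk
      by_cases hk0 : k = 0
      · subst hk0
        norm_num [hq]
      · by_cases hB : B k = 0
        · have hqk : q k = if k = n then 1 else 0 := by
            simp only [hq, if_neg hk0, if_pos hB]
          rw [hqk]
          split_ifs <;> norm_num
        · have hqk : q k = w k / B k := by
            simp only [hq, if_neg hk0, if_neg hB]
          rw [hqk]
          have hBpos : 0 < B k := lt_of_le_of_ne (hBnonneg k hk) (Ne.symm hB)
          constructor
          · exact div_nonneg (hw0' k (by omega) hk) hBpos.le
          · rw [div_le_one hBpos]
            exact hw1' k (by omega) hk
    · simp [hq]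
    · by_cases hB : B n = 0
      · simp [hq, hB]
        omega
      · simp only [hq, if_neg (show ¬ n = 0 by omega), if_neg hB]
        rw [hwn, div_self hB]
    · have h1 : ∑ k ∈ range (n+1), (k:ℝ) * q k * B k = A := by
        rw [hsplit0 (fun k => (k:ℝ) * q k * B k) n]
        simp only [Nat.cast_zero, zero_mul, zero_add]
        rw [← hwA]
        apply Finset.sum_congr rfl
        intro k hk
        rw [mul_assoc, hqB k hk]
      rw [h1, hAdef]
      field_simp
    · have h2 : ∑ k ∈ range (n+1), ((n:ℝ) - k) * q k * B k = (n:ℝ) * S - A := by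
        rw [hsplit0 (fun k => ((n:ℝ) - k) * q k * B k) n]
        have hq0' : q 0 = 0 := by simp [hq]
        simp only [Nat.cast_zero, hq0', mul_zero, zero_mul, sub_zero, zero_add]
        have hexp : ∑ k ∈ Icc 1 n, ((n:ℝ) - k) * q k * B k
            = (n:ℝ) * (∑ k ∈ Icc 1 n, w k) - ∑ k ∈ Icc 1 n, (k:ℝ) * w k := by
          rw [Finset.mul_sum, ← Finset.sum_sub_distrib]
          apply Finset.sum_congr rfl
          intro k hk
          rw [mul_assoc, hqB k hk]
          rw [← hqB k hk]
          ring
        rw [hexp, hwsum, hwA]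
      rw [h2, hSdef, hAdef]
      field_simp
      ring
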